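/- arXiv:1811.10504 — 3 statements merged into one kernel-verified Lean document; each statement's English description precedes it below -/
import Mathlib

section
/- Let p : ℝ → ℂ be a Schwartz function and ṽ : ℝ → ℂ a C² function. Then the kernel K(x,y) = ∫ e^{i(x-y)ξ} p(ξ)(ṽ(y) - ṽ(x)) dξ of the commutator [p(D), ṽ] can be written as K = K₁ + K₂ where K₁(x,y) = ∫ e^{i(x-y)ξ} (-i p'(ξ) ṽ'(x)) dξ is the kernel of -i ṽ' p'(D), and K₂(x,y) = -∫ e^{i(x-y)ξ} p''(ξ) ∫₀¹ ṽ''(h(x-y)+y) h dh dξ. -/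
open MeasureTheory
open intervalIntegral Real Complex FourierTransform

lemma taylor2_aux (v : ℝ → ℂ) (hv : ContDiff ℝ 2 v) (x y : ℝ) :
    v y - v x = ((y : ℂ) - x) * deriv v x
      + ((y : ℂ) - x) ^ 2 * ∫ h in (0:ℝ)..1, iteratedDeriv 2 v (h * (x - y) + y) * (h : ℂ) := by
  have hv1 : ContDiff ℝ 1 (deriv v) := by
    rw [show (2 : WithTop ℕ∞) = 1 + 1 by norm_num] at hv
    exact (contDiff_succ_iff_deriv.mp hv).2.2
  have hdv : Differentiable ℝ v := hv.differentiable (by norm_num)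
  have hdv1 : Differentiable ℝ (deriv v) := hv1.differentiable (by norm_num)
  have hcdd : Continuous (deriv (deriv v)) := hv1.continuous_deriv le_rfl
  have hcd : Continuous (deriv v) := hv.continuous_deriv (by norm_num)
  have hIt : iteratedDeriv 2 v = deriv (deriv v) := by
    rw [iteratedDeriv_succ, iteratedDeriv_one]
  set c : ℝ := y - x with hc
  set G1 : ℝ → ℂ := fun h => (c : ℂ) * deriv v (x + h * c) with hG1def
  set G2 : ℝ → ℂ := fun h => (c : ℂ) ^ 2 * deriv (deriv v) (x + h * c) with hG2def
  have ha : ∀ h : ℝ, HasDerivAt (fun h : ℝ => x + h * c) c h := fun h => by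
    simpa using ((hasDerivAt_id h).mul_const c).const_add x
  have hG0 : ∀ h : ℝ, HasDerivAt (fun h : ℝ => v (x + h * c)) (G1 h) h := fun h => by
    have := ((hdv (x + h * c)).hasDerivAt).scomp h (ha h)
    rw [Complex.real_smul] at this
    exact this
  have hG1 : ∀ h : ℝ, HasDerivAt G1 (G2 h) h := fun h => by
    have h1 : HasDerivAt (fun h : ℝ => deriv v (x + h * c))
        (c • deriv (deriv v) (x + h * c)) h := by
        have := ((hdv1 (x + h * c)).hasDerivAt).scomp h (ha h)
        exact this
    have := h1.const_mul (c : ℂ)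
    rw [Complex.real_smul, ← mul_assoc, ← pow_two] at this
    exact this
  have contG1 : Continuous G1 := continuous_const.mul (hcd.comp (by continuity))
  have contG2 : Continuous G2 := continuous_const.mul (hcdd.comp (by continuity))
  have key0 : (∫ h in (0:ℝ)..1, G1 h) = v y - v x := by
    rw [integral_eq_sub_of_hasDerivAt (fun h _ => hG0 h) (contG1.intervalIntegrable 0 1)]
    norm_num [hc]
  have hu : ∀ h : ℝ, HasDerivAt (fun h : ℝ => (1 : ℂ) - (h : ℂ)) (-1) h := fun h => by
    simpa using (Complex.ofRealCLM.hasDerivAt (x := h)).const_sub 1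
  have key1 : (∫ h in (0:ℝ)..1, ((1 : ℂ) - (h : ℂ)) * G2 h)
      = (1 - 1) * G1 1 - (1 - 0) * G1 0 - ∫ h in (0:ℝ)..1, (-1 : ℂ) * G1 h := by
    have := integral_mul_deriv_eq_deriv_mul (u := fun h : ℝ => (1 : ℂ) - (h : ℂ))
      (u' := fun _ => (-1 : ℂ)) (v := G1) (v' := G2) (a := 0) (b := 1)
      (fun h _ => hu h) (fun h _ => hG1 h)
      (continuous_const.intervalIntegrable 0 1) (contG2.intervalIntegrable 0 1)
    simpa using this
  have key2 : (∫ h in (0:ℝ)..1, G1 h)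
      = G1 0 + ∫ h in (0:ℝ)..1, ((1 : ℂ) - (h : ℂ)) * G2 h := by
    rw [key1]
    simp [intervalIntegral.integral_neg]
  have sub : (∫ h in (0:ℝ)..1, ((1 : ℂ) - (h : ℂ)) * G2 h)
      = ∫ h in (0:ℝ)..1, (h : ℂ) * G2 (1 - h) := by
    rw [show (∫ h in (0:ℝ)..1, (h : ℂ) * G2 (1 - h))
        = ∫ h in (0:ℝ)..1, (fun s : ℝ => ((1 : ℂ) - (s : ℂ)) * G2 s) (1 - h) from by
      congr 1; ext h; push_cast; ring_nf]
    rw [intervalIntegral.integral_comp_sub_left (fun s : ℝ => ((1 : ℂ) - (s : ℂ)) * G2 s) 1]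
    norm_num
  have pt : ∀ h : ℝ, x + (1 - h) * c = h * (x - y) + y := fun h => by rw [hc]; ring
  have rem : (∫ h in (0:ℝ)..1, (h : ℂ) * G2 (1 - h))
      = ((y : ℂ) - x) ^ 2 * ∫ h in (0:ℝ)..1, iteratedDeriv 2 v (h * (x - y) + y) * (h : ℂ) := by
    rw [← intervalIntegral.integral_const_mul]
    congr 1; ext h
    rw [hG2def]
    simp only [pt h, hIt]
    push_cast [hc]
    ring
  have G10 : G1 0 = ((y : ℂ) - x) * deriv v x := by
    rw [hG1def]; push_cast [hc]; norm_num
  rw [← key0, key2, sub, rem, G10]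

/-- Commutator kernel decomposition (Taylor expansion with integral remainder plus
integration by parts in `ξ`): the kernel of `[p(D), ṽ]` splits as `K₁` + `K₂`, where
`K₁` is the kernel of `-i ṽ' p'(D)` and `K₂` carries the second-order remainder. -/
theorem statement_5 (p : SchwartzMap ℝ ℂ) (v : ℝ → ℂ) (hv : ContDiff ℝ 2 v) (x y : ℝ) :
    (∫ ξ : ℝ, Complex.exp (Complex.I * ((x : ℂ) - (y : ℂ)) * (ξ : ℂ)) * p ξ * (v y - v x))
      = (∫ ξ : ℝ, Complex.exp (Complex.I * ((x : ℂ) - (y : ℂ)) * (ξ : ℂ)) *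
            (-Complex.I * deriv (fun ζ : ℝ => p ζ) ξ * deriv v x))
        + (- ∫ ξ : ℝ, Complex.exp (Complex.I * ((x : ℂ) - (y : ℂ)) * (ξ : ℂ)) *
              deriv (deriv (fun ζ : ℝ => p ζ)) ξ *
              (∫ h in (0:ℝ)..1, iteratedDeriv 2 v (h * (x - y) + y) * (h : ℂ))) := by
  set w : ℝ := (y - x) / (2 * π) with hwdef
  have conv1 : ∀ f : ℝ → ℂ,
      (∫ ξ : ℝ, Complex.exp (Complex.I * ((x : ℂ) - (y : ℂ)) * (ξ : ℂ)) * f ξ) = 𝓕 f w := by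
    intro f
    rw [Real.fourier_real_eq_integral_exp_smul]
    congr 1; ext ξ
    rw [smul_eq_mul]
    congr 2
    have hr : -2 * π * ξ * w = (x - y) * ξ := by
      rw [hwdef]; field_simp; ring
    rw [hr]; push_cast; ring
  have e1 : deriv (fun ζ : ℝ => p ζ) = ⇑(SchwartzMap.derivCLM ℝ ℂ p) :=
    funext fun ζ => (SchwartzMap.derivCLM_apply ℝ p ζ).symm
  have e2 : deriv (deriv (fun ζ : ℝ => p ζ))
      = ⇑(SchwartzMap.derivCLM ℝ ℂ (SchwartzMap.derivCLM ℝ ℂ p)) := by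
    rw [e1]
    exact funext fun ζ => (SchwartzMap.derivCLM_apply ℝ (SchwartzMap.derivCLM ℝ ℂ p) ζ).symm
  have hp : Integrable (⇑p) := p.integrable
  have hp1 : Integrable (deriv (fun ζ : ℝ => p ζ)) := by
    rw [e1]; exact (SchwartzMap.derivCLM ℝ ℂ p).integrable
  have hp2 : Integrable (deriv (deriv (fun ζ : ℝ => p ζ))) := by
    rw [e2]; exact (SchwartzMap.derivCLM ℝ ℂ (SchwartzMap.derivCLM ℝ ℂ p)).integrable
  have hd1 : Differentiable ℝ (deriv (fun ζ : ℝ => p ζ)) := by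
    rw [e1]; exact (SchwartzMap.derivCLM ℝ ℂ p).differentiable
  have F1 : 𝓕 (deriv (fun ζ : ℝ => p ζ)) w = (2 * (π : ℂ) * I * (w : ℂ)) • 𝓕 (⇑p) w :=
    congrFun (Real.fourier_deriv hp p.differentiable hp1) w
  have F2 : 𝓕 (deriv (deriv (fun ζ : ℝ => p ζ))) w
      = (2 * (π : ℂ) * I * (w : ℂ)) • 𝓕 (deriv (fun ζ : ℝ => p ζ)) w :=
    congrFun (Real.fourier_deriv hp1 hd1 hp2) w
  rw [MeasureTheory.integral_mul_const, conv1 (⇑p)]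
  simp only [show ∀ ξ : ℝ, Complex.exp (Complex.I * ((x : ℂ) - (y : ℂ)) * (ξ : ℂ)) *
      (-Complex.I * deriv (fun ζ : ℝ => p ζ) ξ * deriv v x)
      = (Complex.exp (Complex.I * ((x : ℂ) - (y : ℂ)) * (ξ : ℂ)) * deriv (fun ζ : ℝ => p ζ) ξ)
        * (-Complex.I * deriv v x) from fun ξ => by ring]
  rw [MeasureTheory.integral_mul_const, conv1 (deriv (fun ζ : ℝ => p ζ)),
    MeasureTheory.integral_mul_const, conv1 (deriv (deriv (fun ζ : ℝ => p ζ))), F2, F1,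
    smul_eq_mul, smul_eq_mul]
  have hw : (2 * (π : ℂ) * I * (w : ℂ)) = I * ((y : ℂ) - x) := by
    have hpi : ((π : ℝ) : ℂ) ≠ 0 := by exact_mod_cast Real.pi_ne_zero
    rw [hwdef]; push_cast; field_simp
  rw [hw, taylor2_aux v hv x y]
  set F := 𝓕 (⇑p) w
  set R := ∫ h in (0:ℝ)..1, iteratedDeriv 2 v (h * (x - y) + y) * (h : ℂ)
  linear_combination (F * ((y : ℂ) - x) * deriv v x + F * ((y : ℂ) - x) ^ 2 * R) * Complex.I_sq
end

section
/- Let a, V : [0,T] × ℝ → ℝ be C¹ functions with a bounded below by a_min > 0, and let λ ≥ 1. Define H(t,x,ξ) = V(t,x)ξ + √(a(t,x)|ξ|) for ξ ≠ 0. Consider the Hamiltonian ODE ẋ = H_ξ(t,x,ξ), ξ̇ = -H_x(t,x,ξ) with initial data (x₀, ξ₀) at time s, where |ξ₀| ∈ [λ/2, 2λ]. Then for as long as the solution exists with ξ(t) ≠ 0, the function m(t) = |ξ(t)|^{1/2} satisfies the differential inequality |m'(t)| ≤ (1/2)(‖∂_x V(t,·)‖_∞ m(t) + ‖∂_x √a(t,·)‖_∞),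 and consequently by Gronwall, if ∫_s^t (‖∂_x V‖_∞ + λ^{-1/2}‖∂_x√a‖_∞ λ^{1/2}) dτ is small enough (≪ 1), then |ξ(t)| ∈ [|ξ₀|/2, 2|ξ₀|] i.e. the flow preserves the dyadic frequency annulus. -/
open MeasureTheory

private lemma freq_aux (A B : ℝ) (hA : 0 ≤ A) (hB : 7/10 ≤ B)
    (hup : (A + 1) * (19/20) ≤ B + 1) (hlo : B + 1 ≤ (A + 1) * (20/19)) :
    B * B / 2 ≤ A * A ∧ A * A ≤ 2 * (B * B) := by
  constructor
  · nlinarith [sq_nonneg (B - 7/10), sq_nonneg (20*A - 19*B + 1), sq_nonneg (A - B), sq_nonneg (A + B)]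
  · nlinarith [sq_nonneg (B - 7/10), sq_nonneg (19*A - 20*B - 1), sq_nonneg (A - B), sq_nonneg (A + B)]

/-- Frequency preservation for the Hamilton flow of `H = Vξ + √(a|ξ|)`:
`m(t) = |ξ(t)|^{1/2}` satisfies `|m'| ≤ (1/2)(‖∂ₓV‖_∞ m + ‖∂ₓ√a‖_∞)`, and by
Gronwall, if the time integral of the coefficient bounds is small enough then the
flow preserves the dyadic frequency annulus: `|ξ(t)| ∈ [|ξ₀|/2, 2|ξ₀|]`. -/
theorem statement_6 :
    ∃ ε : ℝ, 0 < ε ∧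
      ∀ (s T lam amin : ℝ) (a V Vx sax : ℝ → ℝ → ℝ) (g₁ g₂ x ξ : ℝ → ℝ),
        s ≤ T → 1 ≤ lam → 0 < amin →
        (∀ t z, amin ≤ a t z) →
        (∀ t z, HasDerivAt (fun w => V t w) (Vx t z) z) →
        (∀ t z, HasDerivAt (fun w => Real.sqrt (a t w)) (sax t z) z) →
        (∀ t z, |Vx t z| ≤ g₁ t) →
        (∀ t z, |sax t z| ≤ g₂ t) →
        Continuous g₁ → Continuous g₂ →
        (∀ t, 0 ≤ g₁ t) → (∀ t, 0 ≤ g₂ t) →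
        (∀ t ∈ Set.Icc s T, ξ t ≠ 0) →
        (∀ t ∈ Set.Icc s T, HasDerivAt x
            (V t (x t) + (1/2) * Real.sqrt (a t (x t)) * |ξ t| ^ (-(3:ℝ)/2) * ξ t) t) →
        (∀ t ∈ Set.Icc s T, HasDerivAt ξ
            (-(Vx t (x t) * ξ t + sax t (x t) * Real.sqrt |ξ t|)) t) →
        |ξ s| ∈ Set.Icc (lam / 2) (2 * lam) →
        ((∀ t ∈ Set.Icc s T, ∃ m' : ℝ,
            HasDerivAt (fun τ => Real.sqrt |ξ τ|) m' t ∧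
              |m'| ≤ (1/2) * (g₁ t * Real.sqrt |ξ t| + g₂ t)) ∧
          ((∫ τ in s..T, (g₁ τ + lam ^ (-(1:ℝ)/2) * g₂ τ * lam ^ ((1:ℝ)/2))) ≤ ε →
            ∀ t ∈ Set.Icc s T, |ξ t| ∈ Set.Icc (|ξ s| / 2) (2 * |ξ s|))) := by
  refine ⟨1/10, by norm_num, ?_⟩
  intro s T lam amin a V Vx sax g₁ g₂ x ξ hsT hlam hamin ha hV hsa hVxb hsaxb hg₁c hg₂c
    hg₁0 hg₂0 hξne hx hξ hξs
  have hlam0 : (0:ℝ) < lam := lt_of_lt_of_le one_pos hlam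
  have hmpos : ∀ t ∈ Set.Icc s T, 0 < Real.sqrt |ξ t| := fun t ht =>
    Real.sqrt_pos.2 (abs_pos.2 (hξne t ht))
  -- Part 1: the derivative of m = √|ξ| and its bound
  have key : ∀ t ∈ Set.Icc s T, ∃ m' : ℝ,
      HasDerivAt (fun τ => Real.sqrt |ξ τ|) m' t ∧
        |m'| ≤ (1/2) * (g₁ t * Real.sqrt |ξ t| + g₂ t) := by
    intro t ht
    have hξd := hξ t ht
    have hne := hξne t ht
    have hMpos := hmpos t ht
    have hM2 : Real.sqrt |ξ t| * Real.sqrt |ξ t| = |ξ t| := Real.mul_self_sqrt (abs_nonneg _)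
    have habs : ∃ dd : ℝ,
        |dd| = |(-(Vx t (x t) * ξ t + sax t (x t) * Real.sqrt |ξ t|))| ∧
          HasDerivAt (fun τ => |ξ τ|) dd t := by
      rcases hne.lt_or_gt with hneg | hpos
      · refine ⟨-(-(Vx t (x t) * ξ t + sax t (x t) * Real.sqrt |ξ t|)), abs_neg _, ?_⟩
        have h1 : ∀ᶠ τ in nhds t, ξ τ < 0 :=
          hξd.continuousAt.tendsto.eventually_lt_const hneg
        have hev : (fun τ => |ξ τ|) =ᶠ[nhds t] fun τ => -ξ τ := by
          filter_upwards [h1] with τ hτ using abs_of_neg hτ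
        exact hξd.neg.congr_of_eventuallyEq hev
      · refine ⟨_, rfl, ?_⟩
        have h1 : ∀ᶠ τ in nhds t, 0 < ξ τ :=
          hξd.continuousAt.tendsto.eventually_const_lt hpos
        have hev : (fun τ => |ξ τ|) =ᶠ[nhds t] ξ := by
          filter_upwards [h1] with τ hτ using abs_of_pos hτ
        exact hξd.congr_of_eventuallyEq hev
    obtain ⟨dd, hdd, habs⟩ := habs
    have hsq := (Real.hasDerivAt_sqrt (abs_ne_zero.2 hne)).comp t habs
    have hsq' : HasDerivAt (fun τ => Real.sqrt |ξ τ|) (1 / (2 * Real.sqrt |ξ t|) * dd) t := by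
      simpa [Function.comp_def] using hsq
    refine ⟨1 / (2 * Real.sqrt |ξ t|) * dd, hsq', ?_⟩
    have hDb : |dd| ≤ g₁ t * |ξ t| + g₂ t * Real.sqrt |ξ t| := by
      rw [hdd, abs_neg]
      have h1 := abs_add_le (Vx t (x t) * ξ t) (sax t (x t) * Real.sqrt (abs (ξ t)))
      rw [abs_mul, abs_mul, abs_of_nonneg (Real.sqrt_nonneg _)] at h1
      have h2 : |Vx t (x t)| * |ξ t| ≤ g₁ t * |ξ t| :=
        mul_le_mul_of_nonneg_right (hVxb t (x t)) (abs_nonneg _)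
      have h3 : |sax t (x t)| * Real.sqrt (abs (ξ t)) ≤ g₂ t * Real.sqrt (abs (ξ t)) :=
        mul_le_mul_of_nonneg_right (hsaxb t (x t)) (Real.sqrt_nonneg _)
      linarith
    have hfin : ∀ M : ℝ, 0 < M → |dd| ≤ g₁ t * (M * M) + g₂ t * M →
        |1 / (2 * M) * dd| ≤ 1 / 2 * (g₁ t * M + g₂ t) := by
      intro M hMp hb
      have h1 : |1 / (2 * M) * dd| = |dd| / (2 * M) := by
        rw [abs_mul, abs_of_nonneg (by positivity : (0:ℝ) ≤ 1 / (2 * M))]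
        ring
      rw [h1, div_le_iff₀ (by positivity)]
      nlinarith [hb]
    have hb' : |dd| ≤ g₁ t * (Real.sqrt (abs (ξ t)) * Real.sqrt (abs (ξ t)))
        + g₂ t * Real.sqrt (abs (ξ t)) := by
      rw [hM2]; exact hDb
    exact hfin _ hMpos hb'
  refine ⟨key, ?_⟩
  -- Part 2: Gronwall
  intro hsmall t ht
  have hrw : ∀ τ : ℝ, lam ^ (-(1:ℝ)/2) * g₂ τ * lam ^ ((1:ℝ)/2) = g₂ τ := by
    intro τ
    have h : lam ^ (-(1:ℝ)/2) * lam ^ ((1:ℝ)/2) = 1 := by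
      rw [← Real.rpow_add hlam0]; norm_num
    calc lam ^ (-(1:ℝ)/2) * g₂ τ * lam ^ ((1:ℝ)/2)
        = g₂ τ * (lam ^ (-(1:ℝ)/2) * lam ^ ((1:ℝ)/2)) := by ring
      _ = g₂ τ := by rw [h, mul_one]
  simp only [hrw] at hsmall
  set c : ℝ → ℝ := fun τ => g₁ τ + g₂ τ with hcdef
  have hcc : Continuous c := hg₁c.add hg₂c
  have hc0 : ∀ τ, 0 ≤ c τ := fun τ => add_nonneg (hg₁0 τ) (hg₂0 τ)
  set C : ℝ → ℝ := fun r => ∫ τ in s..r, c τ with hCdef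
  have hC' : ∀ r : ℝ, HasDerivAt C (c r) r := fun r =>
    intervalIntegral.integral_hasDerivAt_right (hcc.intervalIntegrable _ _)
      hcc.stronglyMeasurable.stronglyMeasurableAtFilter hcc.continuousAt
  have hCb : ∀ r ∈ Set.Icc s T, 0 ≤ C r ∧ C r ≤ 1/10 := by
    intro r hr
    constructor
    · exact intervalIntegral.integral_nonneg hr.1 fun τ _ => hc0 τ
    · have h1 : C r + (∫ τ in r..T, c τ) = ∫ τ in s..T, c τ :=
        intervalIntegral.integral_add_adjacent_intervals (hcc.intervalIntegrable _ _)
          (hcc.intervalIntegrable _ _)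
      have h2 : 0 ≤ ∫ τ in r..T, c τ :=
        intervalIntegral.integral_nonneg hr.2 fun τ _ => hc0 τ
      have h3 : (∫ τ in s..T, c τ) ≤ 1/10 := hsmall
      linarith
  have hmc : ContinuousOn (fun τ => Real.sqrt |ξ τ|) (Set.Icc s T) := by
    intro r hr
    obtain ⟨m', hm', _⟩ := key r hr
    exact hm'.continuousAt.continuousWithinAt
  have hCc : Continuous C := by
    rw [continuous_iff_continuousAt]; exact fun r => (hC' r).continuousAt
  set F : ℝ → ℝ := fun τ => (Real.sqrt |ξ τ| + 1) * Real.exp (-C τ / 2) with hFdef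
  set G : ℝ → ℝ := fun τ => (Real.sqrt |ξ τ| + 1) * Real.exp (C τ / 2) with hGdef
  have hderiv : ∀ r ∈ Set.Ioo s T, ∃ F' G' : ℝ,
      HasDerivAt F F' r ∧ HasDerivAt G G' r ∧ F' ≤ 0 ∧ 0 ≤ G' := by
    intro r hr
    have hr' : r ∈ Set.Icc s T := ⟨hr.1.le, hr.2.le⟩
    obtain ⟨m', hm', hmb⟩ := key r hr'
    have hmr := hmpos r hr'
    have hu : HasDerivAt (fun τ => Real.sqrt |ξ τ| + 1) m' r := hm'.add_const 1
    have he1 : HasDerivAt (fun τ => -C τ / 2) (-c r / 2) r := (hC' r).neg.div_const 2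
    have he2 : HasDerivAt (fun τ => C τ / 2) (c r / 2) r := (hC' r).div_const 2
    have hF' : HasDerivAt F
        (m' * Real.exp (-C r / 2) +
          (Real.sqrt |ξ r| + 1) * (Real.exp (-C r / 2) * (-c r / 2))) r := hu.mul he1.exp
    have hG' : HasDerivAt G
        (m' * Real.exp (C r / 2) +
          (Real.sqrt |ξ r| + 1) * (Real.exp (C r / 2) * (c r / 2))) r := hu.mul he2.exp
    have hb1 : m' ≤ c r / 2 * (Real.sqrt |ξ r| + 1) := by
      have h1 := le_abs_self m'
      have h2 := hg₁0 r
      have h3 := hg₂0 r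
      have h4 := Real.sqrt_nonneg |ξ r|
      simp only [hcdef]
      nlinarith [hmb]
    have hb2 : -(c r / 2 * (Real.sqrt |ξ r| + 1)) ≤ m' := by
      have h1 := neg_abs_le m'
      have h2 := hg₁0 r
      have h3 := hg₂0 r
      have h4 := Real.sqrt_nonneg |ξ r|
      simp only [hcdef]
      nlinarith [hmb]
    refine ⟨_, _, hF', hG', ?_, ?_⟩
    · nlinarith [Real.exp_pos (-C r / 2), hb1]
    · nlinarith [Real.exp_pos (C r / 2), hb2]
  have hFcont : ContinuousOn F (Set.Icc s T) :=
    (hmc.add continuousOn_const).mul ((hCc.neg.div_const 2).rexp.continuousOn)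
  have hGcont : ContinuousOn G (Set.Icc s T) :=
    (hmc.add continuousOn_const).mul ((hCc.div_const 2).rexp.continuousOn)
  have hFa : AntitoneOn F (Set.Icc s T) := by
    apply antitoneOn_of_deriv_nonpos (convex_Icc s T) hFcont
    · intro r hr
      rw [interior_Icc] at hr
      obtain ⟨F', G', hF', _, _, _⟩ := hderiv r hr
      exact hF'.differentiableAt.differentiableWithinAt
    · intro r hr
      rw [interior_Icc] at hr
      obtain ⟨F', G', hF', _, hF0, _⟩ := hderiv r hr
      rw [hF'.deriv]; exact hF0
  have hGm : MonotoneOn G (Set.Icc s T) := by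
    apply monotoneOn_of_deriv_nonneg (convex_Icc s T) hGcont
    · intro r hr
      rw [interior_Icc] at hr
      obtain ⟨F', G', _, hG', _, _⟩ := hderiv r hr
      exact hG'.differentiableAt.differentiableWithinAt
    · intro r hr
      rw [interior_Icc] at hr
      obtain ⟨F', G', _, hG', _, hG0⟩ := hderiv r hr
      rw [hG'.deriv]; exact hG0
  have hsmem : s ∈ Set.Icc s T := ⟨le_rfl, hsT⟩
  have hFle : F t ≤ F s := hFa hsmem ht ht.1
  have hGle : G s ≤ G t := hGm hsmem ht ht.1
  have hCs : C s = 0 := intervalIntegral.integral_same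
  obtain ⟨hCt0, hCt1⟩ := hCb t ht
  set A := Real.sqrt |ξ t| with hAdef
  set B := Real.sqrt |ξ s| with hBdef
  have hA0 : 0 < A := hmpos t ht
  have hB0 : 0 < B := hmpos s hsmem
  have hB : (7:ℝ)/10 ≤ B := by
    have h1 : (1:ℝ)/2 ≤ |ξ s| := le_trans (by linarith) hξs.1
    calc (7:ℝ)/10 = Real.sqrt ((7/10)^2) := (Real.sqrt_sq (by norm_num)).symm
      _ ≤ Real.sqrt |ξ s| := Real.sqrt_le_sqrt (by norm_num; linarith)
  -- exponential bounds
  have hEm : (19:ℝ)/20 ≤ Real.exp (-C t / 2) := by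
    have := Real.add_one_le_exp (-C t / 2)
    linarith
  have hEp : Real.exp (C t / 2) ≤ 20/19 := by
    have h1 : Real.exp (C t / 2) * Real.exp (-C t / 2) = 1 := by
      rw [← Real.exp_add]; ring_nf; exact Real.exp_zero
    nlinarith [Real.exp_pos (C t / 2), hEm]
  have hFs : F s = B + 1 := by
    simp [hFdef, hCs, hBdef]
  have hGs : G s = B + 1 := by
    simp [hGdef, hCs, hBdef]
  have hup : (A + 1) * (19/20) ≤ B + 1 := by
    have h1 : (A + 1) * (19/20) ≤ (A + 1) * Real.exp (-C t / 2) :=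
      mul_le_mul_of_nonneg_left hEm (by positivity)
    have h2 : (A + 1) * Real.exp (-C t / 2) = F t := rfl
    rw [hFs] at hFle
    linarith
  have hlo : B + 1 ≤ (A + 1) * (20/19) := by
    have h1 : (A + 1) * Real.exp (C t / 2) ≤ (A + 1) * (20/19) :=
      mul_le_mul_of_nonneg_left hEp (by positivity)
    have h2 : (A + 1) * Real.exp (C t / 2) = G t := rfl
    rw [hGs] at hGle
    linarith
  have hAt : |ξ t| = A * A := (Real.mul_self_sqrt (abs_nonneg _)).symm
  have hBs2 : |ξ s| = B * B := (Real.mul_self_sqrt (abs_nonneg _)).symm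
  rw [Set.mem_Icc, hAt, hBs2]
  obtain ⟨hc1, hc2⟩ := freq_aux A B hA0.le hB hup hlo
  exact ⟨hc1, hc2⟩
end

section
/- Let λ ≥ 2, c ∈ (0,1). Suppose x^t, ξ^t are functions of initial data (x,ξ) such that: (a) whenever |x^t(x₁,ξ₁) - x^t(x₂,ξ₂)| ≤ λ^{-3/4} one has |ξ₁ - ξ₂| ≤ 2|ξ^t(x₁,ξ₁) - ξ^t(x₂,ξ₂)| + λ^{3/4}; and (b) whenever additionally at another time s one has |x^s(x₁,ξ₁) - x^s(x₂,ξ₂)| ≤ λ^{-3/4}, the spreading bound λ^{-3/4} ≥ c·λ^{-3/2}(|ξ₁-ξ₂| - λ^{3/4})·|t-s| holds. Then the number of pairs (x,ξ) ∈ λ^{-3/4}ℤ × λ^{3/4}ℤ (with a fixed bound on multiplicity in x of at most C₀) whose trajectories pass within λ^{-3/4} of both (t,y) and (s,z) is at most C·|t-s|^{-1} for a constant C depending only on c and C₀. -/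
/-- ncard of a finite bounded union is at most the sum of ncards. -/
lemma aux_biUnion_ncard (F : Finset ℤ) (t : ℤ → Set (ℝ × ℝ)) :
    (⋃ n ∈ F, t n).Finite → (⋃ n ∈ F, t n).ncard ≤ ∑ n ∈ F, (t n).ncard := by
  classical
  induction F using Finset.induction with
  | empty => simp
  | insert _ _ hx ih =>
    rename_i a s
    intro hfin
    rw [Finset.set_biUnion_insert] at hfin ⊢
    rw [Finset.sum_insert hx]
    calc (t a ∪ ⋃ n ∈ s, t n).ncard ≤ (t a).ncard + (⋃ n ∈ s, t n).ncard :=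
          Set.ncard_union_le _ _
      _ ≤ (t a).ncard + ∑ n ∈ s, (t n).ncard := by
          exact Nat.add_le_add_left (ih (hfin.subset Set.subset_union_right)) _

/-- Count lattice points: if all second coordinates are `B·n` on an integer grid,
pairwise within `B·D`, and fibers have size ≤ C₀, then the set is finite of size
≤ C₀·(2D+1). -/
lemma aux_count (S' : Set (ℝ × ℝ)) (B D : ℝ) (C₀ : ℕ)
    (hB : 0 < B) (hD : 0 ≤ D)
    (h1 : ∀ p ∈ S', ∃ n : ℤ, p.2 = B * n)
    (h2 : ∀ p ∈ S', ∀ q ∈ S', |p.2 - q.2| ≤ B * D)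
    (h3 : ∀ ξ : ℝ, ({x : ℝ | (x, ξ) ∈ S'}).Finite ∧ ({x : ℝ | (x, ξ) ∈ S'}).ncard ≤ C₀) :
    S'.Finite ∧ (S'.ncard : ℝ) ≤ (C₀ : ℝ) * (2 * D + 1) := by
  rcases S'.eq_empty_or_nonempty with h | ⟨p₀, hp₀⟩
  · subst h
    refine ⟨Set.finite_empty, ?_⟩
    simp only [Set.ncard_empty, Nat.cast_zero]
    positivity
  obtain ⟨n₀, hn₀⟩ := h1 p₀ hp₀
  set F : Finset ℤ := Finset.Icc (n₀ - ⌊D⌋) (n₀ + ⌊D⌋) with hF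
  set t : ℤ → Set (ℝ × ℝ) := fun n => {p : ℝ × ℝ | p ∈ S' ∧ p.2 = B * n} with ht
  have htsub : ∀ n : ℤ, t n ⊆ (fun x : ℝ => (x, B * (n:ℝ))) '' {x : ℝ | (x, B * (n:ℝ)) ∈ S'} := by
    intro n p hp
    refine ⟨p.1, ?_, ?_⟩
    · show (p.1, B * (n:ℝ)) ∈ S'
      have h : p = (p.1, B * (n:ℝ)) := by
        ext
        · rfl
        · exact hp.2
      exact h ▸ hp.1
    · ext
      · rfl
      · exact hp.2.symm
  have htfin : ∀ n : ℤ, (t n).Finite := fun n =>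
    (((h3 (B * n)).1.image _).subset (htsub n))
  have htcard : ∀ n : ℤ, (t n).ncard ≤ C₀ := by
    intro n
    calc (t n).ncard ≤ ((fun x : ℝ => (x, B * (n:ℝ))) '' {x : ℝ | (x, B * (n:ℝ)) ∈ S'}).ncard :=
          Set.ncard_le_ncard (htsub n) ((h3 (B * n)).1.image _)
      _ ≤ ({x : ℝ | (x, B * (n:ℝ)) ∈ S'}).ncard := Set.ncard_image_le (h3 (B * n)).1
      _ ≤ C₀ := (h3 (B * n)).2
  have hsub : S' ⊆ ⋃ n ∈ F, t n := by
    intro p hp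
    obtain ⟨n, hn⟩ := h1 p hp
    have hd := h2 p hp p₀ hp₀
    rw [hn, hn₀] at hd
    have : |(n : ℝ) - n₀| ≤ D := by
      rw [← mul_sub, abs_mul, abs_of_pos hB] at hd
      exact le_of_mul_le_mul_left hd hB
    have hn' : |n - n₀| ≤ ⌊D⌋ := by
      rw [Int.le_floor]
      push_cast
      exact this
    rw [abs_le] at hn'
    have hmem : n ∈ F := by
      rw [hF, Finset.mem_Icc]
      omega
    exact Set.mem_biUnion hmem ⟨hp, hn⟩
  have hUfin : (⋃ n ∈ F, t n).Finite := Set.Finite.biUnion F.finite_toSet (fun n _ => htfin n)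
  refine ⟨hUfin.subset hsub, ?_⟩
  have hcard1 : S'.ncard ≤ (⋃ n ∈ F, t n).ncard := Set.ncard_le_ncard hsub hUfin
  have hcard2 := aux_biUnion_ncard F t hUfin
  have hcard3 : ∑ n ∈ F, (t n).ncard ≤ F.card * C₀ := by
    calc ∑ n ∈ F, (t n).ncard ≤ ∑ _n ∈ F, C₀ := Finset.sum_le_sum (fun n _ => htcard n)
      _ = F.card * C₀ := by rw [Finset.sum_const, smul_eq_mul]
  have hFcard : (F.card : ℝ) ≤ 2 * D + 1 := by
    rw [hF, Int.card_Icc]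
    have h0 : (0:ℤ) ≤ ⌊D⌋ := Int.floor_nonneg.mpr hD
    have he : n₀ + ⌊D⌋ + 1 - (n₀ - ⌊D⌋) = 2 * ⌊D⌋ + 1 := by ring
    rw [he]
    have h2 : (0:ℤ) ≤ 2 * ⌊D⌋ + 1 := by omega
    calc ((2 * ⌊D⌋ + 1 : ℤ).toNat : ℝ) = ((2 * ⌊D⌋ + 1 : ℤ) : ℝ) := by
          exact_mod_cast Int.toNat_of_nonneg h2
      _ ≤ 2 * D + 1 := by
          push_cast
          have := Int.floor_le D
          linarith
  have : (S'.ncard : ℝ) ≤ (F.card : ℝ) * C₀ := by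
    have hn : S'.ncard ≤ F.card * C₀ := le_trans hcard1 (le_trans hcard2 hcard3)
    exact_mod_cast hn
  calc (S'.ncard : ℝ) ≤ (F.card : ℝ) * C₀ := this
    _ ≤ (2 * D + 1) * C₀ := by
        apply mul_le_mul_of_nonneg_right hFcard (by positivity)
    _ = (C₀ : ℝ) * (2 * D + 1) := by ring

/-- Two-point overlap bound: characteristics meeting (within `λ^{-3/4}`) at two
times `t, s` must have initial frequencies within `O(λ^{3/4}|t-s|⁻¹)` of each
other; since frequencies lie on a `λ^{3/4}`-grid (with multiplicity at most `C₀`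
in `x`), at most `C·|t-s|⁻¹` lattice packets pass near both points, with `C`
depending only on `c` and `C₀`. -/
theorem statement_11 (c : ℝ) (hc : c ∈ Set.Ioo (0:ℝ) 1) (C₀ : ℕ) :
    ∃ C : ℝ, 0 < C ∧
      ∀ (lam t s y z : ℝ) (xt xs ξt ξs : ℝ → ℝ → ℝ),
        2 ≤ lam → t ≠ s → |t - s| ≤ 1 →
        (∀ x₁ ξ₁ x₂ ξ₂ : ℝ,
            |xt x₁ ξ₁ - xt x₂ ξ₂| ≤ lam ^ (-(3:ℝ)/4) →
              |ξ₁ - ξ₂| ≤ 2 * |ξt x₁ ξ₁ - ξt x₂ ξ₂| + lam ^ ((3:ℝ)/4)) →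
        (∀ x₁ ξ₁ x₂ ξ₂ : ℝ,
            |xt x₁ ξ₁ - xt x₂ ξ₂| ≤ lam ^ (-(3:ℝ)/4) →
            |xs x₁ ξ₁ - xs x₂ ξ₂| ≤ lam ^ (-(3:ℝ)/4) →
              c * lam ^ (-(3:ℝ)/2) * (|ξ₁ - ξ₂| - lam ^ ((3:ℝ)/4)) * |t - s|
                ≤ lam ^ (-(3:ℝ)/4)) →
        ∀ S : Set (ℝ × ℝ),
          S = {p : ℝ × ℝ |
              (∃ m : ℤ, p.1 = lam ^ (-(3:ℝ)/4) * (m : ℝ)) ∧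
              (∃ n : ℤ, p.2 = lam ^ ((3:ℝ)/4) * (n : ℝ)) ∧
              |xt p.1 p.2 - y| ≤ lam ^ (-(3:ℝ)/4) ∧
              |xs p.1 p.2 - z| ≤ lam ^ (-(3:ℝ)/4)} →
          (∀ ξ₀ : ℝ, ({x : ℝ | (x, ξ₀) ∈ S}).Finite ∧
              ({x : ℝ | (x, ξ₀) ∈ S}).ncard ≤ C₀) →
          S.Finite ∧ (S.ncard : ℝ) ≤ C * |t - s|⁻¹ := by
  obtain ⟨hc0, hc1⟩ := hc
  refine ⟨((C₀ : ℝ) + 1) * (12 + 8 / c), by positivity, ?_⟩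
  intro lam t s y z xt xs ξt ξs hlam hts hts1 ha hb S hS hmult
  have hlam0 : (0:ℝ) < lam := by linarith
  have hA0 : (0:ℝ) < lam ^ (-(3:ℝ)/4) := Real.rpow_pos_of_pos hlam0 _
  have hB0 : (0:ℝ) < lam ^ ((3:ℝ)/4) := Real.rpow_pos_of_pos hlam0 _
  have hE0 : (0:ℝ) < lam ^ (-(3:ℝ)/2) := Real.rpow_pos_of_pos hlam0 _
  have hT0 : (0:ℝ) < |t - s| := abs_pos.mpr (sub_ne_zero.mpr hts)
  have hAB : lam ^ (-(3:ℝ)/4) = lam ^ ((3:ℝ)/4) * lam ^ (-(3:ℝ)/2) := by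
    rw [← Real.rpow_add hlam0]; norm_num
  set D : ℝ := 1 + 1 / (c * |t - s|) with hD
  have hD0 : (0:ℝ) ≤ D := by positivity
  -- Key frequency bound from the spreading hypothesis
  have key : ∀ p ∈ S, ∀ q ∈ S,
      |xt p.1 p.2 - xt q.1 q.2| ≤ lam ^ (-(3:ℝ)/4) →
      |xs p.1 p.2 - xs q.1 q.2| ≤ lam ^ (-(3:ℝ)/4) →
      |p.2 - q.2| ≤ lam ^ ((3:ℝ)/4) * D := by
    intro p hp q hq h1 h2
    have hb' := hb p.1 p.2 q.1 q.2 h1 h2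
    rw [hAB] at hb'
    have h3 : c * (|p.2 - q.2| - lam ^ ((3:ℝ)/4)) * |t - s| ≤ lam ^ ((3:ℝ)/4) := by
      have hre : c * lam ^ (-(3:ℝ)/2) * (|p.2 - q.2| - lam ^ ((3:ℝ)/4)) * |t - s|
          = (c * (|p.2 - q.2| - lam ^ ((3:ℝ)/4)) * |t - s|) * lam ^ (-(3:ℝ)/2) := by ring
      rw [hre] at hb'
      exact le_of_mul_le_mul_right hb' hE0
    have h4 : |p.2 - q.2| - lam ^ ((3:ℝ)/4) ≤ lam ^ ((3:ℝ)/4) / (c * |t - s|) := by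
      rw [le_div_iff₀ (by positivity)]
      nlinarith
    have h5 : lam ^ ((3:ℝ)/4) * D
        = lam ^ ((3:ℝ)/4) + lam ^ ((3:ℝ)/4) / (c * |t - s|) := by
      rw [hD]; ring
    linarith
  -- The four classes by side of y (time t) and side of z (time s)
  set cls : Bool → Bool → Set (ℝ × ℝ) := fun b₁ b₂ =>
    {p : ℝ × ℝ | p ∈ S ∧ (xt p.1 p.2 ≤ y ↔ b₁ = true) ∧ (xs p.1 p.2 ≤ z ↔ b₂ = true)}
    with hcls_def
  have hcls : ∀ b₁ b₂, (cls b₁ b₂).Finite ∧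
      ((cls b₁ b₂).ncard : ℝ) ≤ (C₀ : ℝ) * (2 * D + 1) := by
    intro b₁ b₂
    apply aux_count _ _ _ _ hB0 hD0
    · intro p hp
      have := hp.1
      rw [hS] at this
      exact this.2.1
    · intro p hp q hq
      obtain ⟨hpS, hp1, hp2⟩ := hp
      obtain ⟨hqS, hq1, hq2⟩ := hq
      have hpS' := hpS; have hqS' := hqS
      rw [hS] at hpS' hqS'
      obtain ⟨-, -, hpt, hps⟩ := hpS'
      obtain ⟨-, -, hqt, hqs⟩ := hqS'
      rw [abs_le] at hpt hps hqt hqs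
      apply key p hpS q hqS
      · rw [abs_le]
        have hside : xt p.1 p.2 ≤ y ↔ xt q.1 q.2 ≤ y := hp1.trans hq1.symm
        by_cases hcase : xt p.1 p.2 ≤ y
        · have h1' := hside.mp hcase
          constructor <;> linarith
        · have h1' : ¬ xt q.1 q.2 ≤ y := fun hh => hcase (hside.mpr hh)
          have h1'' := not_le.mp hcase
          have h1''' := not_le.mp h1'
          constructor <;> linarith
      · rw [abs_le]
        have hside : xs p.1 p.2 ≤ z ↔ xs q.1 q.2 ≤ z := hp2.trans hq2.symm
        by_cases hcase : xs p.1 p.2 ≤ z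
        · have h1' := hside.mp hcase
          constructor <;> linarith
        · have h1' : ¬ xs q.1 q.2 ≤ z := fun hh => hcase (hside.mpr hh)
          have h1'' := not_le.mp hcase
          have h1''' := not_le.mp h1'
          constructor <;> linarith
    · intro ξ
      have hsub : {x : ℝ | (x, ξ) ∈ cls b₁ b₂} ⊆ {x : ℝ | (x, ξ) ∈ S} :=
        fun x hx => hx.1
      exact ⟨(hmult ξ).1.subset hsub,
        le_trans (Set.ncard_le_ncard hsub (hmult ξ).1) (hmult ξ).2⟩
  have hcover : S ⊆ cls true true ∪ cls true false ∪ cls false true ∪ cls false false := by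
    intro p hp
    by_cases h1 : xt p.1 p.2 ≤ y <;> by_cases h2 : xs p.1 p.2 ≤ z
    · exact Or.inl (Or.inl (Or.inl ⟨hp, iff_of_true h1 rfl, iff_of_true h2 rfl⟩))
    · exact Or.inl (Or.inl (Or.inr ⟨hp, iff_of_true h1 rfl,
        iff_of_false h2 Bool.false_ne_true⟩))
    · exact Or.inl (Or.inr ⟨hp, iff_of_false h1 Bool.false_ne_true, iff_of_true h2 rfl⟩)
    · exact Or.inr ⟨hp, iff_of_false h1 Bool.false_ne_true,
        iff_of_false h2 Bool.false_ne_true⟩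
  have hUfin : (cls true true ∪ cls true false ∪ cls false true ∪ cls false false).Finite :=
    (((hcls true true).1.union (hcls true false).1).union (hcls false true).1).union
      (hcls false false).1
  refine ⟨hUfin.subset hcover, ?_⟩
  have hcount : S.ncard ≤ (cls true true).ncard + (cls true false).ncard
      + (cls false true).ncard + (cls false false).ncard := by
    calc S.ncard
        ≤ (cls true true ∪ cls true false ∪ cls false true ∪ cls false false).ncard :=
          Set.ncard_le_ncard hcover hUfin
      _ ≤ (cls true true ∪ cls true false ∪ cls false true).ncard
            + (cls false false).ncard := Set.ncard_union_le _ _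
      _ ≤ (cls true true ∪ cls true false).ncard + (cls false true).ncard
            + (cls false false).ncard :=
          Nat.add_le_add_right (Set.ncard_union_le _ _) _
      _ ≤ (cls true true).ncard + (cls true false).ncard + (cls false true).ncard
            + (cls false false).ncard := by
          have := Set.ncard_union_le (cls true true) (cls true false)
          omega
  have hcount' : (S.ncard : ℝ) ≤ 4 * ((C₀ : ℝ) * (2 * D + 1)) := by
    have h1 := (hcls true true).2
    have h2 := (hcls true false).2
    have h3 := (hcls false true).2
    have h4 := (hcls false false).2
    have : (S.ncard : ℝ) ≤ ((cls true true).ncard : ℝ) + ((cls true false).ncard : ℝ)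
        + ((cls false true).ncard : ℝ) + ((cls false false).ncard : ℝ) := by
      exact_mod_cast hcount
    linarith
  -- final arithmetic
  have hu : (1:ℝ) ≤ |t - s|⁻¹ := (one_le_inv₀ hT0).mpr hts1
  have hu0 : (0:ℝ) < |t - s|⁻¹ := by positivity
  have hC0 : (0:ℝ) ≤ (C₀ : ℝ) := Nat.cast_nonneg _
  have hcinv : (0:ℝ) < c⁻¹ := by positivity
  have hD' : D = 1 + c⁻¹ * |t - s|⁻¹ := by rw [hD, one_div, mul_inv]
  calc (S.ncard : ℝ) ≤ 4 * ((C₀ : ℝ) * (2 * D + 1)) := hcount'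
    _ ≤ ((C₀ : ℝ) + 1) * (12 + 8 / c) * |t - s|⁻¹ := by
        rw [hD', div_eq_mul_inv]
        nlinarith [mul_le_mul_of_nonneg_left hu (by positivity : (0:ℝ) ≤ 12 * ((C₀:ℝ) + 1)),
          mul_le_mul_of_nonneg_left hu0.le (by positivity : (0:ℝ) ≤ 8 * c⁻¹),
          mul_pos hcinv hu0]
end
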